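/- Let k ≥ 2 and let A_1 ≥ A_2 ≥ … ≥ A_k ≥ 0 be real numbers with A_{k+1} = 0. Suppose that for every j with 1 ≤ j ≤ k we have ∑_{i=1}^{j} A_i ≤ max(j·A_{j+1}, j−1) + j, and suppose A_1 = A_2. Then A_1 ≤ H_{k-1} + 1/2, where H_m is the m-th harmonic number. -/

import Mathlib

/-- The m-th harmonicR number H_m = ∑_{j=1}^m 1/j. -/
noncomputable def harmonicR (m : ℕ) : ℝ := ∑ j ∈ Finset.range m, 1 / (j + 1 : ℝ)

lemma harmonicR_succ (m : ℕ) : harmonicR (m + 1) = harmonicR m + 1 / (m + 1 : ℝ) := by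
  simp [harmonicR, Finset.sum_range_succ]

lemma harmonicR_mono {a b : ℕ} (h : a ≤ b) : harmonicR a ≤ harmonicR b := by
  unfold harmonicR
  apply Finset.sum_le_sum_of_subset_of_nonneg (Finset.range_subset_range.mpr h)
  intro i _ _
  positivity

theorem stmt_4 (k : ℕ) (hk : 2 ≤ k) (A : ℕ → ℝ)
    (hmono : ∀ i : ℕ, 1 ≤ i → i < k → A (i + 1) ≤ A i)
    (hnonneg : 0 ≤ A k)
    (htop : A (k + 1) = 0)
    (hineq : ∀ j : ℕ, 1 ≤ j → j ≤ k →
      ∑ i ∈ Finset.Icc 1 j, A i ≤ max ((j : ℝ) * A (j + 1)) ((j : ℝ) - 1) + (j : ℝ))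
    (hbal : A 1 = A 2) :
    A 1 ≤ harmonicR (k - 1) + 1 / 2 := by
  by_contra hcon
  push_neg at hcon
  -- Invariant: for 2 ≤ j ≤ k, j*(A 1 - H_j + 3/2) ≤ ∑_{i=1}^j A i
  have claim : ∀ j : ℕ, 2 ≤ j → j ≤ k →
      (j : ℝ) * (A 1 - harmonicR j + 3/2) ≤ ∑ i ∈ Finset.Icc 1 j, A i := by
    intro j hj
    induction j, hj using Nat.le_induction with
    | base =>
      intro _
      have h2 : harmonicR 2 = 3/2 := by norm_num [harmonicR, Finset.sum_range_succ]
      have : (Finset.Icc 1 2) = {1, 2} := by decide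
      rw [this, h2]
      simp [Finset.sum_insert, hbal]
      ring_nf
      linarith [hbal]
    | succ j hj2 IH =>
      intro hjk
      have hjk' : j ≤ k := le_trans (Nat.le_succ j) hjk
      have hIH := IH hjk'
      have hj1 : (1:ℕ) ≤ j := le_trans (by norm_num) hj2
      have hjR : (1:ℝ) ≤ (j:ℝ) := by exact_mod_cast hj1
      have hjpos : (0:ℝ) < (j:ℝ) := by linarith
      have hineqj := hineq j hj1 hjk'
      -- case on the max
      rcases max_choice ((j : ℝ) * A (j + 1)) ((j : ℝ) - 1) with hmax | hmax
      · -- max is j * A (j+1) : get lower bound on A (j+1)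
        rw [hmax] at hineqj
        have hA : A 1 - harmonicR j + 1/2 ≤ A (j + 1) := by
          have h1 : (j : ℝ) * (A 1 - harmonicR j + 3/2) - (j:ℝ) ≤ (j:ℝ) * A (j+1) := by
            linarith
          have h2 : (j : ℝ) * (A 1 - harmonicR j + 1/2) ≤ (j:ℝ) * A (j+1) := by
            nlinarith
          exact (mul_le_mul_iff_right₀ hjpos).mp h2
        have hsum : ∑ i ∈ Finset.Icc 1 (j+1), A i
            = (∑ i ∈ Finset.Icc 1 j, A i) + A (j+1) := by
          rw [Finset.sum_Icc_succ_top (by omega : 1 ≤ j + 1)]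
        rw [hsum, harmonicR_succ]
        push_cast
        have hj1R : (0:ℝ) < (j:ℝ) + 1 := by linarith
        have hfrac : ((j:ℝ) + 1) * (1 / ((j:ℝ) + 1)) = 1 := by
          field_simp
        nlinarith [hIH, hA]
      · -- max is j - 1 : direct contradiction
        rw [hmax] at hineqj
        exfalso
        obtain ⟨m, rfl⟩ : ∃ m, j = m + 1 := ⟨j - 1, by omega⟩
        have hH : harmonicR (m+1) = harmonicR m + 1/((m:ℝ)+1) := harmonicR_succ m
        have hHm : harmonicR m ≤ harmonicR (k-1) := harmonicR_mono (by omega)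
        -- j*(A1 - H_j + 3/2) ≤ S_j ≤ 2j - 1
        have key : ((m:ℝ)+1) * (A 1 - harmonicR (m+1) + 3/2) ≤ 2*((m:ℝ)+1) - 1 := by
          push_cast at hIH hineqj ⊢
          linarith
        have hmpos : (0:ℝ) < (m:ℝ) + 1 := by positivity
        have hfrac : ((m:ℝ) + 1) * (1 / ((m:ℝ) + 1)) = 1 := by field_simp
        -- A1 ≤ H_{m+1} + 1/2 - 1/(m+1) = H_m + 1/2
        have : ((m:ℝ)+1) * (A 1) ≤ ((m:ℝ)+1) * (harmonicR m + 1/2) := by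
          nlinarith [key, hH, hfrac]
        have : A 1 ≤ harmonicR m + 1/2 := (mul_le_mul_iff_right₀ hmpos).mp this
        linarith
  -- Final step at j = k
  have hfin := hineq k (by omega) le_rfl
  rw [htop, mul_zero] at hfin
  have hkR : (2:ℝ) ≤ (k:ℝ) := by exact_mod_cast hk
  have hmaxk : max (0:ℝ) ((k:ℝ) - 1) = (k:ℝ) - 1 := by
    apply max_eq_right; linarith
  rw [hmaxk] at hfin
  have hclaim := claim k hk le_rfl
  exfalso
  obtain ⟨m, rfl⟩ : ∃ m, k = m + 1 := ⟨k - 1, by omega⟩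
  have hH : harmonicR (m+1) = harmonicR m + 1/((m:ℝ)+1) := harmonicR_succ m
  have hmpos' : (0:ℝ) < (m:ℝ) + 1 := by positivity
  have hfrac : ((m:ℝ) + 1) * (1 / ((m:ℝ) + 1)) = 1 := by field_simp
  have key : ((m:ℝ)+1) * (A 1 - harmonicR (m+1) + 3/2) ≤ 2*((m:ℝ)+1) - 1 := by
    push_cast at hclaim hfin ⊢
    linarith
  have : ((m:ℝ)+1) * (A 1) ≤ ((m:ℝ)+1) * (harmonicR m + 1/2) := by
    nlinarith [key, hH, hfrac]
  have hA1 : A 1 ≤ harmonicR m + 1/2 := (mul_le_mul_iff_right₀ hmpos').mp this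
  simp only [Nat.add_sub_cancel] at hcon
  linarith
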